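/- Let m, n, k be nonnegative integers with k = m + n + 2 and let i be an integer with 0 < i < k. Then V(m,n,i,j) := Σ_{r_1=0}^{m} Σ_{r_2=0}^{n+1} ((-1)^{k+r_1+r_2}/(n+1)) · C(m, r_1) · C(n+1, r_2) · (n+1-r_2)^i · (k-r_1-r_2)^{j-1} satisfies: V(m,n,i,j) = 0 whenever j ≥ 1 and i + j < k, and V(m,n,i,j) = (-1)^k · n! · (k-i-1)!/(n+1-i)! whenever j ≥ 1, i + j = k and i ≤ n+1. -/

import Mathlib

open Finset in
noncomputable def T (N d : ℕ) : ℚ :=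
  ∑ r ∈ Finset.range (N+1), (-1 : ℚ)^r * (N.choose r) * (r:ℚ)^d

lemma T_succ_succ (N d : ℕ) :
    T (N+1) (d+1) = -(N+1 : ℚ) * ∑ e ∈ Finset.range (d+1), (d.choose e : ℚ) * T N e := by
  unfold T
  rw [Finset.sum_range_succ']
  simp only [pow_zero, Nat.cast_zero, zero_pow (Nat.succ_ne_zero d), mul_zero, add_zero]
  have key : ∀ s, (-1:ℚ)^(s+1) * ((N+1).choose (s+1)) * ((s:ℚ)+1)^(d+1)
      = -(N+1:ℚ) * ((-1:ℚ)^s * (N.choose s) * ((s:ℚ)+1)^d) := by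
    intro s
    have h1 : ((N+1).choose (s+1) : ℚ) * ((s:ℚ)+1) = (N+1 : ℚ) * (N.choose s) := by
      have := Nat.add_one_mul_choose_eq N s
      have h2 : ((N+1) * N.choose s : ℕ) = ((N+1).choose (s+1) * (s+1) : ℕ) := this
      exact_mod_cast h2.symm
    rw [pow_succ (((s:ℚ)+1)) d]
    calc (-1:ℚ)^(s+1) * ((N+1).choose (s+1)) * (((s:ℚ)+1)^d * ((s:ℚ)+1))
        = (-1:ℚ)^(s+1) * (((N+1).choose (s+1) : ℚ) * ((s:ℚ)+1)) * ((s:ℚ)+1)^d := by ring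
      _ = (-1:ℚ)^(s+1) * ((N+1 : ℚ) * (N.choose s)) * ((s:ℚ)+1)^d := by rw [h1]
      _ = -(N+1:ℚ) * ((-1:ℚ)^s * (N.choose s) * ((s:ℚ)+1)^d) := by rw [pow_succ]; ring
  push_cast
  calc ∑ s ∈ Finset.range (N+1), (-1:ℚ)^(s+1) * ((N+1).choose (s+1)) * ((s:ℚ)+1)^(d+1)
      = ∑ s ∈ Finset.range (N+1), -(N+1:ℚ) * ((-1:ℚ)^s * (N.choose s) * ((s:ℚ)+1)^d) := by
        refine Finset.sum_congr rfl fun s _ => ?_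
        have := key s
        push_cast at this ⊢
        linarith [this]
    _ = -(N+1:ℚ) * ∑ s ∈ Finset.range (N+1), (-1:ℚ)^s * (N.choose s) * ((s:ℚ)+1)^d := by
        rw [Finset.mul_sum]
    _ = -(N+1:ℚ) * ∑ e ∈ Finset.range (d+1), (d.choose e : ℚ) * T N e := by
        congr 1
        calc ∑ s ∈ Finset.range (N+1), (-1:ℚ)^s * (N.choose s) * ((s:ℚ)+1)^d
            = ∑ s ∈ Finset.range (N+1), ∑ e ∈ Finset.range (d+1),
                (d.choose e : ℚ) * ((-1:ℚ)^s * (N.choose s) * (s:ℚ)^e) := by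
              refine Finset.sum_congr rfl fun s _ => ?_
              rw [add_pow]
              rw [Finset.mul_sum]
              refine Finset.sum_congr rfl fun e _ => ?_
              simp only [one_pow, mul_one]
              ring
          _ = ∑ e ∈ Finset.range (d+1), (d.choose e : ℚ) * T N e := by
              rw [Finset.sum_comm]
              refine Finset.sum_congr rfl fun e _ => ?_
              unfold T
              rw [Finset.mul_sum]

lemma T_zero : ∀ N d : ℕ, d < N → T N d = 0 := by
  intro N
  induction N with
  | zero => intro d hd; omega
  | succ N ih =>
    intro d hd
    match d with
    | 0 =>
      unfold T
      have h := add_pow (-1 : ℚ) 1 (N+1)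
      simp only [neg_add_cancel, one_pow, mul_one] at h
      rw [zero_pow (by omega : N+1 ≠ 0)] at h
      rw [eq_comm] at h
      rw [← h]
      refine Finset.sum_congr rfl fun r _ => ?_
      simp
    | d+1 =>
      rw [T_succ_succ]
      have : ∑ e ∈ Finset.range (d+1), (d.choose e : ℚ) * T N e = 0 := by
        refine Finset.sum_eq_zero fun e he => ?_
        rw [ih e (by simp at he; omega), mul_zero]
      rw [this, mul_zero]

lemma T_diag : ∀ N : ℕ, T N N = (-1:ℚ)^N * (N.factorial : ℚ) := by
  intro N
  induction N with
  | zero => unfold T; simp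
  | succ N ih =>
    rw [T_succ_succ, Finset.sum_range_succ]
    have : ∑ e ∈ Finset.range N, (N.choose e : ℚ) * T N e = 0 := by
      refine Finset.sum_eq_zero fun e he => ?_
      rw [T_zero N e (by simpa using he), mul_zero]
    rw [this, zero_add, Nat.choose_self, ih]
    push_cast [Nat.factorial_succ, pow_succ]
    ring

lemma L1' (N a t : ℕ) (c : ℚ) :
    ∑ r ∈ Finset.range (N+1), (-1:ℚ)^r * (N.choose r) * (r:ℚ)^a * (c - r)^t
      = ∑ q ∈ Finset.range (t+1), (-1:ℚ)^q * (t.choose q) * c^(t-q) * T N (a+q) := by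
  calc ∑ r ∈ Finset.range (N+1), (-1:ℚ)^r * (N.choose r) * (r:ℚ)^a * (c - r)^t
      = ∑ r ∈ Finset.range (N+1), ∑ q ∈ Finset.range (t+1),
          ((-1:ℚ)^q * (t.choose q) * c^(t-q)) * ((-1:ℚ)^r * (N.choose r) * (r:ℚ)^(a+q)) := by
        refine Finset.sum_congr rfl fun r _ => ?_
        have hc : c - (r:ℚ) = (-(r:ℚ)) + c := by ring
        rw [hc, add_pow, Finset.mul_sum]
        refine Finset.sum_congr rfl fun q _ => ?_
        rw [neg_pow, pow_add]
        ring
    _ = ∑ q ∈ Finset.range (t+1), (-1:ℚ)^q * (t.choose q) * c^(t-q) * T N (a+q) := by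
        rw [Finset.sum_comm]
        refine Finset.sum_congr rfl fun q _ => ?_
        unfold T
        rw [Finset.mul_sum]

lemma L1 (N t : ℕ) (c : ℚ) :
    ∑ r ∈ Finset.range (N+1), (-1:ℚ)^r * (N.choose r) * (c - r)^t
      = ∑ q ∈ Finset.range (t+1), (-1:ℚ)^q * (t.choose q) * c^(t-q) * T N q := by
  have := L1' N 0 t c
  simp only [pow_zero, mul_one, zero_add] at this
  exact this

lemma Lgen (N i t : ℕ) (u c : ℚ) :
    ∑ r ∈ Finset.range (N+1), (-1:ℚ)^r * (N.choose r) * (u - r)^i * (c - r)^t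
      = ∑ q₁ ∈ Finset.range (i+1), ∑ q ∈ Finset.range (t+1),
          (-1:ℚ)^(q₁+q) * (i.choose q₁) * u^(i-q₁) * (t.choose q) * c^(t-q) * T N (q₁+q) := by
  calc ∑ r ∈ Finset.range (N+1), (-1:ℚ)^r * (N.choose r) * (u - r)^i * (c - r)^t
      = ∑ r ∈ Finset.range (N+1), ∑ q₁ ∈ Finset.range (i+1),
          ((-1:ℚ)^q₁ * (i.choose q₁) * u^(i-q₁)) *
            ((-1:ℚ)^r * (N.choose r) * (r:ℚ)^q₁ * (c - r)^t) := by
        refine Finset.sum_congr rfl fun r _ => ?_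
        have hu : u - (r:ℚ) = (-(r:ℚ)) + u := by ring
        rw [hu, add_pow]
        rw [show (-1:ℚ)^r * (N.choose r) *
            (∑ k ∈ Finset.range (i+1), (-(r:ℚ))^k * u^(i-k) * (i.choose k)) * (c - r)^t
          = ∑ k ∈ Finset.range (i+1), ((-1:ℚ)^r * (N.choose r) * ((-(r:ℚ))^k * u^(i-k) * (i.choose k)) * (c - r)^t)
          from by rw [Finset.mul_sum, Finset.sum_mul]]
        refine Finset.sum_congr rfl fun q₁ _ => ?_
        rw [neg_pow]
        ring
    _ = ∑ q₁ ∈ Finset.range (i+1), ∑ q ∈ Finset.range (t+1),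
          (-1:ℚ)^(q₁+q) * (i.choose q₁) * u^(i-q₁) * (t.choose q) * c^(t-q) * T N (q₁+q) := by
        rw [Finset.sum_comm]
        refine Finset.sum_congr rfl fun q₁ _ => ?_
        rw [← Finset.mul_sum, L1' N q₁ t c, Finset.mul_sum]
        refine Finset.sum_congr rfl fun q _ => ?_
        rw [pow_add]
        ring

lemma main_expand (m' N i t : ℕ) (u v : ℚ) :
    ∑ r₁ ∈ Finset.range (m'+1), ∑ r₂ ∈ Finset.range (N+1),
      (-1:ℚ)^(r₁+r₂) * (m'.choose r₁) * (N.choose r₂) * (u - r₂)^i * ((v - r₁) - r₂)^t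
    = ∑ q₁ ∈ Finset.range (i+1), ∑ q ∈ Finset.range (t+1), ∑ p ∈ Finset.range (t-q+1),
        (-1:ℚ)^(q₁+q+p) * (i.choose q₁) * u^(i-q₁) * (t.choose q) * ((t-q).choose p)
          * v^(t-q-p) * T N (q₁+q) * T m' p := by
  calc ∑ r₁ ∈ Finset.range (m'+1), ∑ r₂ ∈ Finset.range (N+1),
      (-1:ℚ)^(r₁+r₂) * (m'.choose r₁) * (N.choose r₂) * (u - r₂)^i * ((v - r₁) - r₂)^t
      = ∑ r₁ ∈ Finset.range (m'+1), ((-1:ℚ)^r₁ * (m'.choose r₁)) *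
          ∑ r₂ ∈ Finset.range (N+1),
            (-1:ℚ)^r₂ * (N.choose r₂) * (u - r₂)^i * ((v - r₁) - r₂)^t := by
        refine Finset.sum_congr rfl fun r₁ _ => ?_
        rw [Finset.mul_sum]
        refine Finset.sum_congr rfl fun r₂ _ => ?_
        rw [pow_add]; ring
    _ = ∑ r₁ ∈ Finset.range (m'+1), ∑ q₁ ∈ Finset.range (i+1), ∑ q ∈ Finset.range (t+1),
          ((-1:ℚ)^(q₁+q) * (i.choose q₁) * u^(i-q₁) * (t.choose q) * T N (q₁+q)) *
            ((-1:ℚ)^r₁ * (m'.choose r₁) * (v - r₁)^(t-q)) := by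
        refine Finset.sum_congr rfl fun r₁ _ => ?_
        rw [Lgen N i t u (v - (r₁:ℚ)), Finset.mul_sum]
        refine Finset.sum_congr rfl fun q₁ _ => ?_
        rw [Finset.mul_sum]
        refine Finset.sum_congr rfl fun q _ => ?_
        ring
    _ = ∑ q₁ ∈ Finset.range (i+1), ∑ q ∈ Finset.range (t+1),
          ((-1:ℚ)^(q₁+q) * (i.choose q₁) * u^(i-q₁) * (t.choose q) * T N (q₁+q)) *
            ∑ r₁ ∈ Finset.range (m'+1), (-1:ℚ)^r₁ * (m'.choose r₁) * (v - r₁)^(t-q) := by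
        rw [Finset.sum_comm]
        refine Finset.sum_congr rfl fun q₁ _ => ?_
        rw [Finset.sum_comm]
        refine Finset.sum_congr rfl fun q _ => ?_
        rw [Finset.mul_sum]
    _ = ∑ q₁ ∈ Finset.range (i+1), ∑ q ∈ Finset.range (t+1), ∑ p ∈ Finset.range (t-q+1),
        (-1:ℚ)^(q₁+q+p) * (i.choose q₁) * u^(i-q₁) * (t.choose q) * ((t-q).choose p)
          * v^(t-q-p) * T N (q₁+q) * T m' p := by
        refine Finset.sum_congr rfl fun q₁ _ => ?_
        refine Finset.sum_congr rfl fun q _ => ?_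
        rw [L1 m' (t-q) v, Finset.mul_sum]
        refine Finset.sum_congr rfl fun p _ => ?_
        rw [pow_add (-1:ℚ) (q₁+q) p]
        ring

/-- `V(m,n,i,j)` from the paper's evaluation of `ζ_q^R` at nonpositive integers. -/
noncomputable def V (m n i j : ℕ) : ℚ :=
  ∑ r₁ ∈ Finset.range (m + 1), ∑ r₂ ∈ Finset.range (n + 2),
    ((-1 : ℚ) ^ (m + n + 2 + r₁ + r₂) / (n + 1)) * (Nat.choose m r₁) *
      (Nat.choose (n + 1) r₂) * ((n + 1 - r₂ : ℕ) : ℚ) ^ i *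
        ((m + n + 2 - r₁ - r₂ : ℕ) : ℚ) ^ (j - 1)

theorem stmt_19 (m n k : ℕ) (hk : k = m + n + 2) (i j : ℕ) (hi0 : 0 < i) (hik : i < k)
    (hj : 1 ≤ j) :
    (i + j < k → V m n i j = 0) ∧
    (i + j = k → i ≤ n + 1 →
      V m n i j = (-1 : ℚ) ^ k * (Nat.factorial n) * (Nat.factorial (k - i - 1)) /
        (Nat.factorial (n + 1 - i))) := by
  subst hk
  have hV : V m n i j = ((-1:ℚ)^(m+n+2)/((n:ℚ)+1)) *
      ∑ r₁ ∈ Finset.range (m+1), ∑ r₂ ∈ Finset.range (n+1+1),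
        (-1:ℚ)^(r₁+r₂) * (m.choose r₁) * ((n+1).choose r₂) *
          (((n:ℚ)+1) - r₂)^i * ((((m:ℚ)+(n:ℚ)+2) - r₁) - r₂)^(j-1) := by
    unfold V
    rw [Finset.mul_sum]
    refine Finset.sum_congr rfl fun r₁ hr₁ => ?_
    rw [Finset.mul_sum]
    refine Finset.sum_congr rfl fun r₂ hr₂ => ?_
    rw [Finset.mem_range] at hr₁ hr₂
    have h1 : ((n + 1 - r₂ : ℕ) : ℚ) = ((n:ℚ)+1) - r₂ := by
      rw [Nat.cast_sub (by omega)]; push_cast; ring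
    have h2 : ((m + n + 2 - r₁ - r₂ : ℕ) : ℚ) = (((m:ℚ)+(n:ℚ)+2) - r₁) - r₂ := by
      rw [show m+n+2-r₁-r₂ = m+n+2-(r₁+r₂) from by omega, Nat.cast_sub (by omega)]
      push_cast; ring
    rw [h1, h2, show m+n+2+r₁+r₂ = (m+n+2)+(r₁+r₂) from by omega,
      pow_add (-1:ℚ) (m+n+2) (r₁+r₂)]
    push_cast
    ring
  rw [main_expand m (n+1) i (j-1) ((n:ℚ)+1) ((m:ℚ)+(n:ℚ)+2)] at hV
  constructor
  · intro hlt
    rw [hV]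
    rw [Finset.sum_eq_zero, mul_zero]
    intro q₁ hq₁
    rw [Finset.mem_range] at hq₁
    refine Finset.sum_eq_zero fun q hq => ?_
    rw [Finset.mem_range] at hq
    refine Finset.sum_eq_zero fun p hp => ?_
    rw [Finset.mem_range] at hp
    by_cases hc : q₁ + q < n + 1
    · rw [T_zero (n+1) (q₁+q) hc]; ring
    · rw [T_zero m p (by omega)]; ring
  · intro heq hin
    rw [hV]
    rw [Finset.sum_eq_single_of_mem i (Finset.self_mem_range_succ i) ?h0]
    case h0 =>
      intro q₁ hq₁ hne
      rw [Finset.mem_range] at hq₁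
      refine Finset.sum_eq_zero fun q hq => ?_
      rw [Finset.mem_range] at hq
      refine Finset.sum_eq_zero fun p hp => ?_
      rw [Finset.mem_range] at hp
      by_cases hc : q₁ + q < n + 1
      · rw [T_zero (n+1) (q₁+q) hc]; ring
      · rw [T_zero m p (by omega)]; ring
    rw [Finset.sum_eq_single_of_mem (n+1-i) (Finset.mem_range.mpr (by omega)) ?h1]
    case h1 =>
      intro q hq hne
      rw [Finset.mem_range] at hq
      refine Finset.sum_eq_zero fun p hp => ?_
      rw [Finset.mem_range] at hp
      by_cases hc : i + q < n + 1
      · rw [T_zero (n+1) (i+q) hc]; ring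
      · rw [T_zero m p (by omega)]; ring
    rw [Finset.sum_eq_single_of_mem m (Finset.mem_range.mpr (by omega)) ?h2]
    case h2 =>
      intro p hp hne
      rw [Finset.mem_range] at hp
      rw [T_zero m p (by omega)]; ring
    -- final numeric evaluation
    rw [show i + (n+1-i) = n+1 from by omega, show j-1-(n+1-i) = m from by omega,
      show m+n+2-i-1 = j-1 from by omega]
    rw [T_diag (n+1), T_diag m, Nat.choose_self, Nat.choose_self, Nat.sub_self, Nat.sub_self]
    have hch : ((j-1).choose (n+1-i) : ℚ) * ((n+1-i).factorial : ℚ) * (m.factorial : ℚ)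
        = ((j-1).factorial : ℚ) := by
      have h := Nat.choose_mul_factorial_mul_factorial (show n+1-i ≤ j-1 by omega)
      rw [show j-1-(n+1-i) = m from by omega] at h
      exact_mod_cast h
    have hfact : ((n+1).factorial : ℚ) = ((n:ℚ)+1) * (n.factorial : ℚ) := by
      rw [Nat.factorial_succ]; push_cast; ring
    have hsgn : (-1:ℚ)^(n+1+m) * ((-1:ℚ)^(n+1) * (-1:ℚ)^m) = 1 := by
      rw [← pow_add, ← pow_add, show n+1+m+(n+1+m) = 2*(n+1+m) from by ring, pow_mul]
      norm_num
    have hne1 : ((n:ℚ)+1) ≠ 0 := by positivity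
    have hne2 : ((n+1-i).factorial : ℚ) ≠ 0 := by
      exact_mod_cast Nat.factorial_ne_zero (n+1-i)
    field_simp
    rw [hfact]
    linear_combination (((n:ℚ)+1) * (n.factorial:ℚ) *
        ((-1:ℚ)^(n+1+m) * ((-1:ℚ)^(n+1) * (-1:ℚ)^m))) * hch
      + (((n:ℚ)+1) * (n.factorial:ℚ) * (((j-1).factorial:ℚ))) * hsgn
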